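/- Let $(\xi(z))_{z\in\mathbb{Z}^d}$ be i.i.d. standard exponential random variables. For $n\in\mathbb{N}$ let $M_n^{(k)}$ denote the $k$-th largest value of $\xi$ on the $\ell^1$-ball $\{|z|\le n\}$. Fix $0<\beta<1$. Then almost surely $\lim_{n\to\infty} M_n^{(\lfloor n^{\beta}\rfloor)}/\log n = d-\beta$. -/

import Mathlib

open MeasureTheory ProbabilityTheory Real Filter
open scoped ENNReal

open scoped Classical in
/-- The `ℓ¹`-ball of radius `n` in `ℤ^d`, as a finset. -/
noncomputable def latticeBall (d n : ℕ) : Finset (Fin d → ℤ) :=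
  (Finset.Icc (fun _ => -(n : ℤ)) fun _ => (n : ℤ)).filter fun z => (∑ i, (z i).natAbs) ≤ n

lemma latticeBall_card_le (d n : ℕ) (hn : 1 ≤ n) :
    ((latticeBall d n).card : ℝ) ≤ (3 * (n : ℝ)) ^ d := by
  classical
  have hfac : (Finset.Icc (-(n:ℤ)) (n:ℤ)).card = 2 * n + 1 := by rw [Int.card_Icc]; omega
  have h1 : (latticeBall d n).card ≤ (2 * n + 1) ^ d := by
    refine (Finset.card_filter_le _ _).trans ?_
    rw [Pi.card_Icc]
    simp [hfac]
  calc ((latticeBall d n).card : ℝ) ≤ (((2 * n + 1) ^ d : ℕ) : ℝ) := Nat.cast_le.2 h1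
    _ = ((2 * n + 1 : ℕ) : ℝ) ^ d := by push_cast; ring
    _ ≤ (3 * (n : ℝ)) ^ d := by
        apply pow_le_pow_left₀ (by positivity)
        have : (1 : ℝ) ≤ (n : ℝ) := by exact_mod_cast hn
        push_cast
        linarith

lemma latticeBall_card_ge (d n : ℕ) (hd : 1 ≤ d) :
    ((n : ℝ) / d) ^ d ≤ ((latticeBall d n).card : ℝ) := by
  classical
  have hsub : (Finset.Icc (fun _ => (0:ℤ)) fun _ => ((n / d : ℕ) : ℤ)) ⊆ latticeBall d n := by
    intro z hz
    rw [Finset.mem_Icc, Pi.le_def, Pi.le_def] at hz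
    obtain ⟨hz0, hz1⟩ := hz
    have hdn : n / d ≤ n := Nat.div_le_self n d
    rw [latticeBall, Finset.mem_filter, Finset.mem_Icc, Pi.le_def, Pi.le_def]
    refine ⟨⟨fun i => ?_, fun i => ?_⟩, ?_⟩
    · have := hz0 i; omega
    · have h1 := hz1 i
      have h2 : ((n / d : ℕ) : ℤ) ≤ (n : ℤ) := by exact_mod_cast hdn
      omega
    · have hle : ∀ i, (z i).natAbs ≤ n / d := by
        intro i
        have h1 := hz0 i; have h2 := hz1 i
        omega
      calc (∑ i, (z i).natAbs) ≤ ∑ _i : Fin d, n / d := Finset.sum_le_sum fun i _ => hle i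
        _ = d * (n / d) := by
            rw [Finset.sum_const, Finset.card_univ, Fintype.card_fin, smul_eq_mul]
        _ = n / d * d := mul_comm _ _
        _ ≤ n := Nat.div_mul_le_self n d
  have hfac : (Finset.Icc (0:ℤ) ((n/d : ℕ):ℤ)).card = n / d + 1 := by
    have he : ((n/d:ℕ):ℤ) + 1 - 0 = ((n/d + 1 : ℕ) : ℤ) := by push_cast; ring
    rw [Int.card_Icc, he, Int.toNat_natCast]
  have hcard : (n / d + 1) ^ d ≤ (latticeBall d n).card := by
    have h := Finset.card_le_card hsub
    rw [Pi.card_Icc] at h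
    simpa only [hfac, Finset.prod_const, Finset.card_univ, Fintype.card_fin] using h
  have hdpos : (0:ℝ) < d := by exact_mod_cast hd
  have hreal : (n : ℝ) / d ≤ ((n / d + 1 : ℕ) : ℝ) := by
    rw [div_le_iff₀ hdpos]
    have hnat : n < (n / d + 1) * d := by
      have h1 := Nat.div_add_mod n d
      have h2 : n % d < d := Nat.mod_lt _ (by omega)
      nlinarith [Nat.zero_le (n/d)]
    calc (n : ℝ) ≤ (((n / d + 1) * d : ℕ) : ℝ) := by exact_mod_cast hnat.le
      _ = ((n/d + 1 : ℕ) : ℝ) * d := by push_cast; ring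
  calc ((n : ℝ) / d) ^ d ≤ (((n / d + 1 : ℕ) : ℝ)) ^ d :=
        pow_le_pow_left₀ (by positivity) hreal d
    _ = (((n / d + 1) ^ d : ℕ) : ℝ) := by push_cast; ring
    _ ≤ ((latticeBall d n).card : ℝ) := Nat.cast_le.2 hcard

open scoped Classical in
lemma union_bound {Ω : Type*} [MeasurableSpace Ω] (P : Measure Ω) [IsProbabilityMeasure P]
    {ι : Type*} (ξ : ι → Ω → ℝ)
    (hindep : iIndepFun ξ P)
    (B : Set ℝ) (hB : MeasurableSet B) (r : ℝ≥0∞) (hr : ∀ z, P (ξ z ⁻¹' B) = r)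
    (s : Finset ι) (m : ℕ) :
    P {ω | m ≤ ((s.filter fun z => ξ z ω ∈ B).card)} ≤ (s.card.choose m) * r ^ m := by
  have hsub : {ω | m ≤ ((s.filter fun z => ξ z ω ∈ B).card)}
      ⊆ ⋃ S ∈ s.powersetCard m, ⋂ z ∈ S, ξ z ⁻¹' B := by
    intro ω hω
    obtain ⟨T, hT, hTc⟩ := Finset.exists_subset_card_eq hω
    refine Set.mem_biUnion
      (Finset.mem_powersetCard.2 ⟨hT.trans (Finset.filter_subset _ _), hTc⟩) ?_
    exact Set.mem_iInter₂.2 fun z hz => (Finset.mem_filter.1 (hT hz)).2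
  refine (measure_mono hsub).trans ?_
  refine (measure_biUnion_finset_le _ _).trans ?_
  have heach : ∀ S ∈ s.powersetCard m, P (⋂ z ∈ S, ξ z ⁻¹' B) = r ^ m := by
    intro S hS
    rw [hindep.meas_biInter (fun z _ => ⟨B, hB, rfl⟩),
      Finset.prod_congr rfl (fun z _ => hr z), Finset.prod_const,
      (Finset.mem_powersetCard.1 hS).2]
  rw [Finset.sum_congr rfl heach, Finset.sum_const, Finset.card_powersetCard, nsmul_eq_mul]

lemma eventually_rpow_ge (K : ℝ) {δ : ℝ} (hδ : 0 < δ) :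
    ∀ᶠ n : ℕ in atTop, K ≤ (n : ℝ) ^ δ :=
  ((tendsto_rpow_atTop hδ).comp tendsto_natCast_atTop_atTop).eventually_ge_atTop K

lemma eventually_linlog (K K' : ℝ) (hK : 0 ≤ K) {δ : ℝ} (hδ : 0 < δ) :
    ∀ᶠ n : ℕ in atTop, K * Real.log n + K' ≤ (n : ℝ) ^ δ := by
  have h2 : 0 < δ / 2 := by linarith
  filter_upwards [eventually_rpow_ge (max (4 * K / δ) (max (2 * K') 1)) h2,
    eventually_ge_atTop 1] with n h1 hn1
  have hN1 : (1 : ℝ) ≤ (n : ℝ) := by exact_mod_cast hn1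
  have hN0 : (0 : ℝ) < (n : ℝ) := by linarith
  set X := (n : ℝ) ^ (δ / 2) with hX
  have hXa : 4 * K / δ ≤ X := le_trans (le_max_left _ _) h1
  have hXb : 2 * K' ≤ X := le_trans ((le_max_left _ _).trans (le_max_right _ _)) h1
  have hXc : (1 : ℝ) ≤ X := le_trans ((le_max_right _ _).trans (le_max_right _ _)) h1
  have hlog : Real.log n ≤ X / (δ / 2) := Real.log_le_rpow_div (le_of_lt hN0) h2
  have hlog0 : 0 ≤ Real.log n := Real.log_nonneg hN1
  have hsq : (n : ℝ) ^ δ = X * X := by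
    rw [hX, ← Real.rpow_add hN0]
    norm_num
  rw [hsq]
  have hKlog : K * Real.log n ≤ X * X / 2 := by
    have h3 : K * Real.log n ≤ K * (X / (δ / 2)) := mul_le_mul_of_nonneg_left hlog hK
    have h4 : K * (X / (δ / 2)) = (4 * K / δ) * X / 2 := by field_simp; ring
    have h5 := mul_le_mul_of_nonneg_right hXa (by positivity : (0:ℝ) ≤ X)
    linarith
  have hK' : K' ≤ X * X / 2 := by nlinarith
  linarith

lemma half_le_floor {x : ℝ} (hx : 1 ≤ x) : x / 2 ≤ (⌊x⌋₊ : ℝ) := by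
  rcases le_or_gt x 2 with h | h
  · have h1 : (1 : ℕ) ≤ ⌊x⌋₊ := Nat.le_floor (by exact_mod_cast hx)
    have : (1 : ℝ) ≤ (⌊x⌋₊ : ℝ) := by exact_mod_cast h1
    linarith
  · have := Nat.sub_one_lt_floor x
    linarith

lemma tsum_ne_top_of_eventually {Ω : Type*} [MeasurableSpace Ω] (P : Measure Ω)
    [IsProbabilityMeasure P] (A : ℕ → Set Ω) (c : ℕ → ℝ) (hc0 : ∀ n, 0 ≤ c n) (hc : Summable c)
    (h : ∀ᶠ n in atTop, P (A n) ≤ ENNReal.ofReal (c n)) :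
    (∑' n, P (A n)) ≠ ⊤ := by
  obtain ⟨N, hN⟩ := eventually_atTop.1 h
  set c' : ℕ → ℝ := fun n => if n < N then 1 else c n with hc'
  have hsum' : Summable c' := by
    rw [← summable_nat_add_iff N]
    refine ((summable_nat_add_iff N).2 hc).congr fun n => ?_
    simp only [hc']
    rw [if_neg (by omega)]
  have hle : ∀ n, P (A n) ≤ ENNReal.ofReal (c' n) := by
    intro n
    by_cases hn : n < N
    · simp only [hc', if_pos hn, ENNReal.ofReal_one]
      exact prob_le_one
    · simpa only [hc', if_neg hn] using hN n (le_of_not_gt hn)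
  have hc'0 : ∀ n, 0 ≤ c' n := by
    intro n; simp only [hc']; split
    · norm_num
    · exact hc0 n
  have hfin : (∑' n, P (A n)) ≤ ENNReal.ofReal (∑' n, c' n) := by
    calc (∑' n, P (A n)) ≤ ∑' n, ENNReal.ofReal (c' n) := ENNReal.tsum_le_tsum hle
      _ = ENNReal.ofReal (∑' n, c' n) := (ENNReal.ofReal_tsum_of_nonneg hc'0 hsum').symm
  exact ne_top_of_le_ne_top ENNReal.ofReal_ne_top hfin

set_option maxHeartbeats 1000000 in
open scoped Classical in
lemma upper_bound_aux {Ω : Type*} [MeasurableSpace Ω] (P : Measure Ω) [IsProbabilityMeasure P]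
    (d : ℕ) (hd : 1 ≤ d) (ξ : (Fin d → ℤ) → Ω → ℝ)
    (hmeas : ∀ z, Measurable (ξ z))
    (hindep : iIndepFun ξ P)
    (hlaw : ∀ z, ∀ x : ℝ, 0 ≤ x → P {ω | x < ξ z ω} = ENNReal.ofReal (Real.exp (-x)))
    (β : ℝ) (hβ : β ∈ Set.Ioo (0 : ℝ) 1) (M : ℕ → Ω → ℝ)
    (hM : ∀ n : ℕ, 1 ≤ n → ∀ ω,
      (∃ z ∈ latticeBall d n, ξ z ω = M n ω) ∧
      ⌊(n : ℝ) ^ β⌋₊ ≤ ((latticeBall d n).filter fun z => M n ω ≤ ξ z ω).card ∧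
      ((latticeBall d n).filter fun z => M n ω < ξ z ω).card < ⌊(n : ℝ) ^ β⌋₊)
    (ε : ℝ) (hε : 0 < ε) :
    ∀ᵐ ω ∂P, ∀ᶠ n : ℕ in atTop, M n ω ≤ ((d : ℝ) - β + ε) * Real.log n := by
  have hd1 : (1:ℝ) ≤ (d:ℝ) := by exact_mod_cast hd
  set A : ℕ → Set Ω := fun n => {ω | ((d:ℝ) - β + ε) * Real.log n < M n ω} with hA
  have key : ∀ᶠ n : ℕ in atTop, P (A n) ≤ ENNReal.ofReal ((n:ℝ) ^ (-2 : ℝ)) := by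
    have hlog2 : (0:ℝ) < Real.log 2 := Real.log_pos (by norm_num)
    filter_upwards [eventually_ge_atTop 1, eventually_rpow_ge (4 * Real.exp 1 * 3 ^ d) hε,
      eventually_linlog (4 / Real.log 2) 0 (by positivity) hβ.1] with n h1 h2 h3
    have hN1 : (1:ℝ) ≤ (n:ℝ) := by exact_mod_cast h1
    have hN0 : (0:ℝ) < (n:ℝ) := by linarith
    have hlogn : 0 ≤ Real.log n := Real.log_nonneg hN1
    set X := (n:ℝ) with hXdef
    set c : ℝ := (d:ℝ) - β + ε with hc
    have hc0 : 0 < c := by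
      have := hβ.2
      simp only [hc]; linarith
    set a : ℝ := c * Real.log n with ha
    have ha0 : 0 ≤ a := mul_nonneg hc0.le hlogn
    set l := (latticeBall d n).card with hl
    set k := ⌊(n:ℝ)^β⌋₊ with hk
    have hXβ1 : (1:ℝ) ≤ X ^ β := by
      calc (1:ℝ) = 1 ^ β := (Real.one_rpow β).symm
        _ ≤ X ^ β := Real.rpow_le_rpow (by norm_num) hN1 hβ.1.le
    have hkX : X ^ β / 2 ≤ (k:ℝ) := half_le_floor hXβ1
    have hkpos : (0:ℝ) < (k:ℝ) := lt_of_lt_of_le (by positivity) hkX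
    set p : ℝ := Real.exp (-a) with hp
    have hp0 : (0:ℝ) < p := Real.exp_pos _
    have hple : p = X ^ (-c) := by
      rw [Real.rpow_def_of_pos hN0, hp, ha]
      congr 1; ring
    have hcont : A n ⊆ {ω | k ≤ ((latticeBall d n).filter fun z => ξ z ω ∈ Set.Ioi a).card} := by
      intro ω hω
      refine le_trans (hM n h1 ω).2.1 (Finset.card_le_card ?_)
      exact Finset.monotone_filter_right _ fun z _ hz => lt_of_lt_of_le hω hz
    have hr : ∀ z, P (ξ z ⁻¹' Set.Ioi a) = ENNReal.ofReal p := by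
      intro z
      have hpre : ξ z ⁻¹' Set.Ioi a = {ω | a < ξ z ω} := rfl
      rw [hpre, hlaw z a ha0]
    have hub := union_bound P ξ hindep (Set.Ioi a) measurableSet_Ioi _ hr (latticeBall d n) k
    -- real estimates
    have hl3 : (l:ℝ) ≤ (3*X)^d := latticeBall_card_le d n h1
    have hlp : (l:ℝ) * p ≤ 3^d * (X^β * X^(-ε)) := by
      have hEq : (3*X)^d * p = 3^d * (X^β * X^(-ε)) := by
        rw [hple, mul_pow, mul_assoc, ← Real.rpow_natCast X d, ← Real.rpow_add hN0]
        have hex : (d:ℝ) + -c = β + -ε := by simp only [hc]; ring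
        rw [hex, Real.rpow_add hN0]
      calc (l:ℝ)*p ≤ (3*X)^d * p := mul_le_mul_of_nonneg_right hl3 hp0.le
        _ = _ := hEq
    have hXε : (0:ℝ) < X^ε := Real.rpow_pos_of_pos hN0 ε
    have hinv : X^(-ε) = (X^ε)⁻¹ := Real.rpow_neg hN0.le ε
    have h2' : Real.exp 1 * 3^d * (X^ε)⁻¹ ≤ 1/4 := by
      have hi : (X^ε)⁻¹ ≤ (4 * Real.exp 1 * 3^d)⁻¹ := inv_anti₀ (by positivity) h2
      calc Real.exp 1 * 3^d * (X^ε)⁻¹ ≤ Real.exp 1 * 3^d * (4 * Real.exp 1 * 3^d)⁻¹ :=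
            mul_le_mul_of_nonneg_left hi (by positivity)
        _ = 1/4 := by
            rw [eq_div_iff (by norm_num : (4:ℝ) ≠ 0)]
            field_simp
    have hratio : Real.exp 1 * l * p ≤ (k:ℝ)/2 := by
      calc Real.exp 1 * l * p = Real.exp 1 * ((l:ℝ) * p) := by ring
        _ ≤ Real.exp 1 * (3^d * (X^β * X^(-ε))) :=
            mul_le_mul_of_nonneg_left hlp (Real.exp_pos 1).le
        _ = (Real.exp 1 * 3^d * (X^ε)⁻¹) * X^β := by rw [hinv]; ring
        _ ≤ (1/4) * X^β := mul_le_mul_of_nonneg_right h2' (Real.rpow_nonneg hN0.le β)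
        _ ≤ (k:ℝ)/2 := by linarith
    have hck : (l.choose k : ℝ) ≤ (Real.exp 1 * l / k)^k := by
      have hfac0 : (0:ℝ) < (k.factorial : ℝ) := by exact_mod_cast k.factorial_pos
      calc (l.choose k : ℝ) ≤ ((l:ℝ))^k / (k.factorial : ℝ) := Nat.choose_le_pow_div k l
        _ ≤ (Real.exp 1 * l / k)^k := by
            rw [div_pow, div_le_div_iff₀ hfac0 (by positivity)]
            have h1' : ((k:ℝ))^k ≤ Real.exp 1 ^ k * (k.factorial : ℝ) := by
              have hh := Real.pow_div_factorial_le_exp (x := (k:ℝ)) (Nat.cast_nonneg k) k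
              rw [div_le_iff₀ hfac0] at hh
              calc ((k:ℝ))^k ≤ Real.exp (k:ℝ) * (k.factorial : ℝ) := hh
                _ = Real.exp 1 ^ k * (k.factorial : ℝ) := by
                    rw [← Real.exp_nat_mul, mul_one]
            calc ((l:ℝ))^k * ((k:ℝ))^k ≤ ((l:ℝ))^k * (Real.exp 1 ^ k * (k.factorial:ℝ)) :=
                  mul_le_mul_of_nonneg_left h1' (by positivity)
              _ = (Real.exp 1 * l)^k * (k.factorial:ℝ) := by rw [mul_pow]; ring
    have hhalf : (l.choose k : ℝ) * p^k ≤ (1/2:ℝ)^k := by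
      calc (l.choose k : ℝ) * p^k ≤ (Real.exp 1 * l / k)^k * p^k :=
            mul_le_mul_of_nonneg_right hck (by positivity)
        _ = (Real.exp 1 * l * p / k)^k := by rw [← mul_pow]; congr 1; ring
        _ ≤ (1/2:ℝ)^k := by
            apply pow_le_pow_left₀ (by positivity)
            rw [div_le_iff₀ hkpos]
            linarith
    have hklog : 2 * Real.log X ≤ (k:ℝ) * Real.log 2 := by
      have h3' : (4 / Real.log 2) * Real.log X ≤ 2 * (k:ℝ) := by
        have := h3
        simp only [add_zero] at this
        linarith
      have hmul := mul_le_mul_of_nonneg_right h3' hlog2.le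
      have hcalc : (4 / Real.log 2) * Real.log X * Real.log 2 = 4 * Real.log X := by
        field_simp
      rw [hcalc] at hmul
      linarith
    have hfinal : ((1:ℝ)/2)^k ≤ X^(-2:ℝ) := by
      have h2X : X ^ (2:ℝ) ≤ (2:ℝ)^k := by
        rw [Real.rpow_def_of_pos hN0,
          show ((2:ℝ)^k) = (2:ℝ)^((k:ℕ):ℝ) from (Real.rpow_natCast 2 k).symm,
          Real.rpow_def_of_pos (by norm_num : (0:ℝ) < 2)]
        exact Real.exp_le_exp.2 (by linarith)
      calc ((1:ℝ)/2)^k = ((2:ℝ)^k)⁻¹ := by rw [one_div, inv_pow]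
        _ ≤ (X^(2:ℝ))⁻¹ := inv_anti₀ (by positivity) h2X
        _ = X^(-2:ℝ) := (Real.rpow_neg hN0.le 2).symm
    calc P (A n) ≤ P {ω | k ≤ ((latticeBall d n).filter fun z => ξ z ω ∈ Set.Ioi a).card} :=
          measure_mono hcont
      _ ≤ (l.choose k) * (ENNReal.ofReal p)^k := hub
      _ = ENNReal.ofReal ((l.choose k : ℝ) * p^k) := by
          rw [ENNReal.ofReal_mul (Nat.cast_nonneg _), ENNReal.ofReal_natCast,
            ENNReal.ofReal_pow hp0.le]
      _ ≤ ENNReal.ofReal (X^(-2:ℝ)) := ENNReal.ofReal_le_ofReal (hhalf.trans hfinal)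
  have hsum := tsum_ne_top_of_eventually P A (fun n => (n:ℝ)^(-2:ℝ))
    (fun n => Real.rpow_nonneg (Nat.cast_nonneg n) _)
    (Real.summable_nat_rpow.2 (by norm_num)) key
  filter_upwards [MeasureTheory.ae_eventually_notMem hsum] with ω hω
  filter_upwards [hω] with n hn
  exact not_lt.1 hn

set_option maxHeartbeats 1000000 in
open scoped Classical in
lemma lower_bound_aux {Ω : Type*} [MeasurableSpace Ω] (P : Measure Ω) [IsProbabilityMeasure P]
    (d : ℕ) (hd : 1 ≤ d) (ξ : (Fin d → ℤ) → Ω → ℝ)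
    (hmeas : ∀ z, Measurable (ξ z))
    (hindep : iIndepFun ξ P)
    (hlaw : ∀ z, ∀ x : ℝ, 0 ≤ x → P {ω | x < ξ z ω} = ENNReal.ofReal (Real.exp (-x)))
    (β : ℝ) (hβ : β ∈ Set.Ioo (0 : ℝ) 1) (M : ℕ → Ω → ℝ)
    (hM : ∀ n : ℕ, 1 ≤ n → ∀ ω,
      (∃ z ∈ latticeBall d n, ξ z ω = M n ω) ∧
      ⌊(n : ℝ) ^ β⌋₊ ≤ ((latticeBall d n).filter fun z => M n ω ≤ ξ z ω).card ∧
      ((latticeBall d n).filter fun z => M n ω < ξ z ω).card < ⌊(n : ℝ) ^ β⌋₊)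
    (ε : ℝ) (hε : 0 < ε) (hεd : ε ≤ (d:ℝ) - β) :
    ∀ᵐ ω ∂P, ∀ᶠ n : ℕ in atTop, ((d : ℝ) - β - ε) * Real.log n ≤ M n ω := by
  have hd1 : (1:ℝ) ≤ (d:ℝ) := by exact_mod_cast hd
  have hdR : (0:ℝ) < (d:ℝ) := by linarith
  have h1β : 0 < 1 - β := by linarith [hβ.2]
  set A : ℕ → Set Ω := fun n => {ω | M n ω < ((d:ℝ) - β - ε) * Real.log n} with hA
  set Kc : ℝ := 2 * (d:ℝ)^d * ((d:ℝ)+2) with hKcdef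
  have hKc0 : 0 ≤ Kc := by positivity
  have key : ∀ᶠ n : ℕ in atTop, P (A n) ≤ ENNReal.ofReal ((n:ℝ) ^ (-2 : ℝ)) := by
    filter_upwards [eventually_ge_atTop (max 1 d), eventually_rpow_ge (2*(d:ℝ)) h1β,
      eventually_linlog Kc (Kc * Real.log 3) hKc0 hε] with n h1 h2 h3
    have h1n : 1 ≤ n := le_trans (le_max_left _ _) h1
    have hdn : d ≤ n := le_trans (le_max_right _ _) h1
    have hN1 : (1:ℝ) ≤ (n:ℝ) := by exact_mod_cast h1n
    have hN0 : (0:ℝ) < (n:ℝ) := by linarith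
    have hlogn : 0 ≤ Real.log n := Real.log_nonneg hN1
    set X := (n:ℝ) with hXdef
    set c : ℝ := (d:ℝ) - β - ε with hc
    have hc0 : 0 ≤ c := by simp only [hc]; linarith
    set a : ℝ := c * Real.log n with ha
    have ha0 : 0 ≤ a := mul_nonneg hc0 hlogn
    set l := (latticeBall d n).card with hl
    set k := ⌊(n:ℝ)^β⌋₊ with hk
    have hXβ1 : (1:ℝ) ≤ X ^ β := by
      calc (1:ℝ) = 1 ^ β := (Real.one_rpow β).symm
        _ ≤ X ^ β := Real.rpow_le_rpow (by norm_num) hN1 hβ.1.le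
    have hkβ : (k:ℝ) ≤ X ^ β := Nat.floor_le (by positivity)
    set p : ℝ := Real.exp (-a) with hp
    have hp0 : (0:ℝ) < p := Real.exp_pos _
    have hp1 : p ≤ 1 := by
      have := Real.exp_le_exp.2 (neg_nonpos.2 ha0)
      rwa [Real.exp_zero] at this
    have hple : p = X ^ (-c) := by
      rw [Real.rpow_def_of_pos hN0, hp, ha]
      congr 1; ring
    -- size facts
    have hdX : (d:ℝ) ≤ X := by rw [hXdef]; exact_mod_cast hdn
    have hXd1 : (1:ℝ) ≤ X / d := (one_le_div hdR).2 hdX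
    have hlge : (X/d)^d ≤ (l:ℝ) := latticeBall_card_ge d n hd
    have hXdl : X/d ≤ (l:ℝ) := le_trans (le_self_pow₀ hXd1 (by omega)) hlge
    have hl0 : (0:ℝ) < (l:ℝ) := lt_of_lt_of_le (by positivity) hXdl
    have hl1 : (1:ℝ) ≤ (l:ℝ) := le_trans hXd1 hXdl
    have hl3 : (l:ℝ) ≤ (3*X)^d := latticeBall_card_le d n h1n
    -- k small compared to l
    have hXsplit : X^β * X^(1-β) = X := by
      rw [← Real.rpow_add hN0]; norm_num
    have hkhalf : (k:ℝ) ≤ (l:ℝ)/2 := by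
      have hs : X^β * (2*(d:ℝ)) ≤ X := by
        calc X^β * (2*(d:ℝ)) ≤ X^β * X^(1-β) :=
              mul_le_mul_of_nonneg_left h2 (by positivity)
          _ = X := hXsplit
      have : X^β ≤ (X/d)/2 := by
        rw [div_div, le_div_iff₀ (by positivity)]
        linarith [hs]
      linarith [hkβ, this, hXdl]
    have hkl : k ≤ l := by
      have : (k:ℝ) ≤ (l:ℝ) := by linarith
      exact_mod_cast this
    have hk1l : k - 1 ≤ l := le_trans (Nat.sub_le k 1) hkl
    set m := l - (k - 1) with hm
    have hmcast : (m:ℝ) = (l:ℝ) - ((k-1:ℕ):ℝ) := by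
      rw [hm]; push_cast [Nat.cast_sub hk1l]; ring
    have hk1cast : ((k-1:ℕ):ℝ) ≤ (k:ℝ) := Nat.cast_le.2 (Nat.sub_le _ _)
    have hm2 : (l:ℝ)/2 ≤ (m:ℝ) := by rw [hmcast]; linarith
    -- event containment
    have hcont : A n ⊆
        {ω | m ≤ ((latticeBall d n).filter fun z => ξ z ω ∈ Set.Iic a).card} := by
      intro ω hω
      have hω' : M n ω < a := hω
      have h5 := (hM n h1n ω).2.2
      have hsub2 : ((latticeBall d n).filter fun z => ¬(ξ z ω ∈ Set.Iic a)) ⊆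
          ((latticeBall d n).filter fun z => M n ω < ξ z ω) := by
        refine Finset.monotone_filter_right _ fun z _ hz => ?_
        simp only [Set.mem_Iic, not_le] at hz
        exact lt_trans hω' hz
      have h6 : ((latticeBall d n).filter fun z => ¬(ξ z ω ∈ Set.Iic a)).card ≤ k - 1 :=
        Nat.le_sub_one_of_lt (lt_of_le_of_lt (Finset.card_le_card hsub2) h5)
      have h7 := Finset.card_filter_add_card_filter_not
        (s := latticeBall d n) (p := fun z => ξ z ω ∈ Set.Iic a)
      show m ≤ ((latticeBall d n).filter fun z => ξ z ω ∈ Set.Iic a).card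
      omega
    -- probability of a single site being small
    have hq : ∀ z, P (ξ z ⁻¹' Set.Iic a) = ENNReal.ofReal (1 - p) := by
      intro z
      have hpre : ξ z ⁻¹' Set.Iic a = (ξ z ⁻¹' Set.Ioi a)ᶜ := by
        rw [← Set.preimage_compl, Set.compl_Ioi]
      have hIoi : P (ξ z ⁻¹' Set.Ioi a) = ENNReal.ofReal p := hlaw z a ha0
      rw [hpre, prob_compl_eq_one_sub ((hmeas z) measurableSet_Ioi), hIoi,
        ← ENNReal.ofReal_one, ← ENNReal.ofReal_sub 1 hp0.le]
    have hub := union_bound P ξ hindep (Set.Iic a) measurableSet_Iic _ hq (latticeBall d n) m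
    -- real estimates
    have hcsym : l.choose m = l.choose (k-1) := by rw [hm]; exact Nat.choose_symm hk1l
    have hchle : (l.choose m : ℝ) ≤ (l:ℝ)^(k-1) := by
      rw [hcsym]
      calc (l.choose (k-1) : ℝ) ≤ ((l^(k-1) : ℕ) : ℝ) := Nat.cast_le.2 (Nat.choose_le_pow l (k-1))
        _ = (l:ℝ)^(k-1) := by push_cast; ring
    have h1p : (0:ℝ) ≤ 1 - p := by linarith
    have hexp : (1-p)^m ≤ Real.exp (-(p*m)) := by
      calc (1-p)^m ≤ (Real.exp (-p))^m := by
            apply pow_le_pow_left₀ h1p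
            linarith [Real.add_one_le_exp (-p)]
        _ = Real.exp (-(p * m)) := by rw [← Real.exp_nat_mul]; congr 1; ring
    have hlexp : (l:ℝ)^(k-1) = Real.exp (((k-1:ℕ):ℝ) * Real.log l) := by
      rw [Real.exp_nat_mul, Real.exp_log hl0]
    -- the key exponent inequality
    have hlogl : Real.log l ≤ (d:ℝ) * Real.log (3*X) := by
      calc Real.log l ≤ Real.log ((3*X)^d) := Real.log_le_log hl0 hl3
        _ = (d:ℝ) * Real.log (3*X) := Real.log_pow (3*X) d
    have hlog3X0 : 0 ≤ Real.log (3*X) := Real.log_nonneg (by linarith)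
    have hterm1 : ((k-1:ℕ):ℝ) * Real.log l ≤ X^β * ((d:ℝ) * Real.log (3*X)) := by
      apply mul_le_mul (le_trans hk1cast hkβ) hlogl (Real.log_nonneg hl1) (by positivity)
    have hterm2 : 2 * Real.log X ≤ 2 * (X^β * Real.log (3*X)) := by
      have hlogX3 : Real.log X ≤ Real.log (3*X) := Real.log_le_log hN0 (by linarith)
      nlinarith
    have hpm : X^β * (X^ε / (2*(d:ℝ)^d)) ≤ p * m := by
      have hex : -c + (d:ℝ) = β + ε := by simp only [hc]; ring
      have hplX : p * ((X/d)^d) = X^(β+ε)/(d:ℝ)^d := by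
        rw [hple, div_pow, ← Real.rpow_natCast X d, ← mul_div_assoc, ← Real.rpow_add hN0, hex]
      have hpl : X^(β+ε)/(d:ℝ)^d ≤ p * l := by
        rw [← hplX]
        exact mul_le_mul_of_nonneg_left hlge hp0.le
      have hsplit2 : X^β * (X^ε / (2*(d:ℝ)^d)) = (X^(β+ε)/(d:ℝ)^d)/2 := by
        rw [Real.rpow_add hN0]; ring
      rw [hsplit2]
      calc (X^(β+ε)/(d:ℝ)^d)/2 ≤ (p*l)/2 := by linarith
        _ = p * ((l:ℝ)/2) := by ring
        _ ≤ p * m := mul_le_mul_of_nonneg_left hm2 hp0.le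
    have hKc' : Kc * Real.log (3*X) ≤ X^ε := by
      rw [Real.log_mul (by norm_num) (ne_of_gt hN0), mul_add]
      linarith [h3]
    have h' : ((d:ℝ)+2) * Real.log (3*X) ≤ X^ε/(2*(d:ℝ)^d) := by
      rw [le_div_iff₀ (by positivity)]
      calc ((d:ℝ)+2) * Real.log (3*X) * (2*(d:ℝ)^d) = Kc * Real.log (3*X) := by
            rw [hKcdef]; ring
        _ ≤ X^ε := hKc'
    have hmid : ((d:ℝ)+2) * (X^β * Real.log (3*X)) ≤ X^β * (X^ε/(2*(d:ℝ)^d)) := by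
      calc ((d:ℝ)+2) * (X^β * Real.log (3*X)) = X^β * (((d:ℝ)+2) * Real.log (3*X)) := by ring
        _ ≤ X^β * (X^ε/(2*(d:ℝ)^d)) := mul_le_mul_of_nonneg_left h' (by positivity)
    have hring : X^β * ((d:ℝ) * Real.log (3*X)) + 2 * (X^β * Real.log (3*X))
        = ((d:ℝ)+2) * (X^β * Real.log (3*X)) := by ring
    have hkey : ((k-1:ℕ):ℝ) * Real.log l - p * m ≤ -(2 * Real.log X) := by
      linarith [hterm1, hterm2, hring, hmid, hpm]
    have hQ : (l.choose m : ℝ) * (1-p)^m ≤ X^(-2:ℝ) := by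
      calc (l.choose m : ℝ) * (1-p)^m ≤ (l:ℝ)^(k-1) * Real.exp (-(p*m)) :=
            mul_le_mul hchle hexp (pow_nonneg h1p m) (by positivity)
        _ = Real.exp (((k-1:ℕ):ℝ) * Real.log l - p*m) := by
            rw [hlexp, ← Real.exp_add, sub_eq_add_neg]
        _ ≤ Real.exp (-(2*Real.log X)) := Real.exp_le_exp.2 hkey
        _ = X^(-2:ℝ) := by rw [Real.rpow_def_of_pos hN0]; congr 1; ring
    calc P (A n) ≤ P {ω | m ≤ ((latticeBall d n).filter fun z => ξ z ω ∈ Set.Iic a).card} :=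
          measure_mono hcont
      _ ≤ (l.choose m) * (ENNReal.ofReal (1-p))^m := hub
      _ = ENNReal.ofReal ((l.choose m : ℝ) * (1-p)^m) := by
          rw [ENNReal.ofReal_mul (Nat.cast_nonneg _), ENNReal.ofReal_natCast,
            ENNReal.ofReal_pow h1p]
      _ ≤ ENNReal.ofReal (X^(-2:ℝ)) := ENNReal.ofReal_le_ofReal hQ
  have hsum := tsum_ne_top_of_eventually P A (fun n => (n:ℝ)^(-2:ℝ))
    (fun n => Real.rpow_nonneg (Nat.cast_nonneg n) _)
    (Real.summable_nat_rpow.2 (by norm_num)) key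
  filter_upwards [MeasureTheory.ae_eventually_notMem hsum] with ω hω
  filter_upwards [hω] with n hn
  exact not_lt.1 hn

open scoped Classical in
/-- Almost surely, the `⌊n^β⌋`-th largest value of an i.i.d. standard exponential potential on
the `ℓ¹`-ball of radius `n` is asymptotic to `(d - β) log n`. -/
theorem order_statistic_asymptotics
    {Ω : Type*} [MeasurableSpace Ω] (P : Measure Ω) [IsProbabilityMeasure P]
    (d : ℕ) (hd : 1 ≤ d) (ξ : (Fin d → ℤ) → Ω → ℝ)
    (hmeas : ∀ z, Measurable (ξ z))
    (hindep : iIndepFun ξ P)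
    (hlaw : ∀ z, ∀ x : ℝ, 0 ≤ x → P {ω | x < ξ z ω} = ENNReal.ofReal (Real.exp (-x)))
    (β : ℝ) (hβ : β ∈ Set.Ioo (0 : ℝ) 1)
    (M : ℕ → Ω → ℝ)
    -- `M n ω` is the `⌊n^β⌋`-th largest value of `ξ(·)(ω)` on the ball of radius `n`:
    -- it is attained, at least `⌊n^β⌋` values are `≥ M n ω`, fewer than `⌊n^β⌋` exceed it.
    (hM : ∀ n : ℕ, 1 ≤ n → ∀ ω,
      (∃ z ∈ latticeBall d n, ξ z ω = M n ω) ∧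
      ⌊(n : ℝ) ^ β⌋₊ ≤ ((latticeBall d n).filter fun z => M n ω ≤ ξ z ω).card ∧
      ((latticeBall d n).filter fun z => M n ω < ξ z ω).card < ⌊(n : ℝ) ^ β⌋₊) :
    ∀ᵐ ω ∂P, Tendsto (fun n : ℕ => M n ω / Real.log n) atTop (nhds (d - β)) := by
  
  have hd1 : (1:ℝ) ≤ (d:ℝ) := by exact_mod_cast hd
  have hdβ : (0:ℝ) < (d:ℝ) - β := by linarith [hβ.2]
  have hae : ∀ᵐ ω ∂P, ∀ j : ℕ,
      (∀ᶠ n : ℕ in atTop, M n ω ≤ ((d:ℝ) - β + ((d:ℝ)-β)/(j+1)) * Real.log n) ∧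
      (∀ᶠ n : ℕ in atTop, ((d:ℝ) - β - ((d:ℝ)-β)/(j+1)) * Real.log n ≤ M n ω) := by
    rw [MeasureTheory.ae_all_iff]
    intro j
    have hj0 : (0:ℝ) < (j:ℝ) + 1 := by positivity
    have hεj : 0 < ((d:ℝ)-β)/(j+1) := by positivity
    have hεjd : ((d:ℝ)-β)/(j+1) ≤ (d:ℝ) - β := by
      rw [div_le_iff₀ hj0]
      nlinarith [Nat.cast_nonneg (α := ℝ) j]
    filter_upwards [upper_bound_aux P d hd ξ hmeas hindep hlaw β hβ M hM _ hεj,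
      lower_bound_aux P d hd ξ hmeas hindep hlaw β hβ M hM _ hεj hεjd] with ω h1 h2
    exact ⟨h1, h2⟩
  filter_upwards [hae] with ω hω
  rw [Metric.tendsto_atTop]
  intro δ hδ
  obtain ⟨j, hj⟩ : ∃ j : ℕ, ((d:ℝ)-β)/((j:ℝ)+1) < δ := by
    obtain ⟨j, hj⟩ := exists_nat_gt (((d:ℝ)-β)/δ)
    refine ⟨j, ?_⟩
    rw [div_lt_iff₀ (by positivity)]
    rw [div_lt_iff₀ hδ] at hj
    nlinarith
  obtain ⟨N1, hN1⟩ := eventually_atTop.1 (hω j).1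
  obtain ⟨N2, hN2⟩ := eventually_atTop.1 (hω j).2
  refine ⟨max 2 (max N1 N2), fun n hn => ?_⟩
  have hn2 : 2 ≤ n := le_trans (le_max_left _ _) hn
  have h1 := hN1 n (le_trans ((le_max_left _ _).trans (le_max_right _ _)) hn)
  have h2 := hN2 n (le_trans ((le_max_right _ _).trans (le_max_right _ _)) hn)
  have hn2R : (2:ℝ) ≤ (n:ℝ) := by exact_mod_cast hn2
  have hlogpos : 0 < Real.log n := Real.log_pos (by linarith)
  set εj := ((d:ℝ)-β)/((j:ℝ)+1) with hεjdef
  have hu : M n ω / Real.log n ≤ (d:ℝ)-β+εj := (div_le_iff₀ hlogpos).2 (by linarith)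
  have hlo : (d:ℝ)-β-εj ≤ M n ω / Real.log n := (le_div_iff₀ hlogpos).2 (by linarith)
  rw [Real.dist_eq, abs_lt]
  constructor
  · linarith
  · linarith
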